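/- arXiv:2409.00730 — 4 statements merged into one kernel-verified Lean document; each statement's English description precedes it below -/
import Mathlib

section
/- Let n ≥ 1 and let 𝒢 be a set of maps from Euclidean space ℝⁿ to itself such that every G ∈ 𝒢 is a bijective isometry. Let μ₀ be a 𝒢-invariant probability measure on ℝⁿ, let X₀ be a random vector with law μ₀, let ε be a standard Gaussian random vector on ℝⁿ independent of X₀, and let σ > 0. Then the law of X₀ + σ·ε is 𝒢-invariant (the variance-exploding case of the paper's Theorem 1: Gaussian perturbation preserves invariance under groups of isometries). -/
open MeasureTheory ProbabilityTheory
open scoped ENNReal NNReal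

/-- The standard Gaussian measure on `EuclideanSpace ℝ (Fin n)`: the law of a random vector with
independent standard normal coordinates. -/
noncomputable def stdGaussian (n : ℕ) : Measure (EuclideanSpace ℝ (Fin n)) :=
  (Measure.pi fun _ : Fin n => gaussianReal 0 1).map
    (MeasurableEquiv.toLp 2 (Fin n → ℝ))

instance stdGaussian_isProbabilityMeasure (n : ℕ) : IsProbabilityMeasure (stdGaussian n) :=
  Measure.isProbabilityMeasure_map
    (MeasurableEquiv.toLp 2 (Fin n → ℝ)).measurable.aemeasurable

/-- Pushing forward a `withDensity` measure along a measurable equivalence. -/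
lemma map_withDensity_equiv {α β : Type*} [MeasurableSpace α] [MeasurableSpace β]
    (μ : Measure α) (e : α ≃ᵐ β) (g : β → ℝ≥0∞) (hg : Measurable g) :
    (μ.withDensity (g ∘ e)).map e = (μ.map e).withDensity g := by
  ext s hs
  rw [Measure.map_apply e.measurable hs, withDensity_apply _ (e.measurable hs),
    withDensity_apply _ hs, setLIntegral_map hs hg e.measurable]
  rfl

/-- The product of standard gaussians on `Fin n → ℝ` as a density against Lebesgue measure. -/
lemma pi_gaussian_eq_withDensity (n : ℕ) :
    (Measure.pi fun _ : Fin n => gaussianReal 0 1)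
      = (volume : Measure (Fin n → ℝ)).withDensity
          (fun x => ENNReal.ofReal (∏ i, gaussianPDFReal 0 1 (x i))) := by
  refine Measure.pi_eq fun s hs => ?_
  set φ : ℝ → ℝ := gaussianPDFReal 0 1 with hφ
  set F : Fin n → ℝ → ℝ := fun i => (s i).indicator φ with hF
  have hFi : ∀ i, Integrable (F i) := fun i =>
    (integrable_gaussianPDFReal 0 1).indicator (hs i)
  have hFnn : ∀ i x, 0 ≤ F i x := fun i x =>
    Set.indicator_nonneg (fun y _ => gaussianPDFReal_nonneg 0 1 y) x
  have hind : (Set.univ.pi s).indicator (fun x => ENNReal.ofReal (∏ i, φ (x i)))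
      = fun x => ENNReal.ofReal (∏ i, F i (x i)) := by
    funext x
    by_cases hx : x ∈ Set.univ.pi s
    · rw [Set.indicator_of_mem hx]
      congr 1
      exact Finset.prod_congr rfl fun i _ =>
        (Set.indicator_of_mem (hx i trivial) φ).symm
    · rw [Set.indicator_of_notMem hx]
      rw [Set.mem_univ_pi] at hx
      obtain ⟨i, hi⟩ := not_forall.mp hx
      rw [Finset.prod_eq_zero (Finset.mem_univ i)
        (by rw [hF]; exact Set.indicator_of_notMem hi φ)]
      simp
  have key : ∫⁻ x in Set.univ.pi s, ENNReal.ofReal (∏ i, φ (x i))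
      = ∏ i, ∫⁻ x, ENNReal.ofReal (F i x) := by
    rw [← lintegral_indicator (MeasurableSet.univ_pi hs), hind, volume_pi,
      ← ofReal_integral_eq_lintegral_ofReal (Integrable.fintype_prod hFi)
        (Filter.Eventually.of_forall fun x => Finset.prod_nonneg fun i _ => hFnn i _),
      integral_fintype_prod_eq_prod F,
      ENNReal.ofReal_prod_of_nonneg fun i _ => integral_nonneg (hFnn i)]
    exact Finset.prod_congr rfl fun i _ =>
      ofReal_integral_eq_lintegral_ofReal (hFi i)
        (Filter.Eventually.of_forall (hFnn i))
  rw [withDensity_apply _ (MeasurableSet.univ_pi hs), key]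
  refine (Finset.prod_congr rfl fun i _ => ?_).symm
  rw [gaussianReal_of_var_ne_zero 0 one_ne_zero,
    withDensity_apply _ (hs i), ← lintegral_indicator (hs i)]
  congr 1
  funext x
  simp only [hF, hφ]
  by_cases hx : x ∈ s i <;> simp [Set.indicator_apply, hx, gaussianPDF]

/-- The product of 1D standard gaussian densities is a function of the Euclidean norm. -/
lemma prod_gaussianPDFReal_eq (n : ℕ) (x : EuclideanSpace ℝ (Fin n)) :
    ∏ i, gaussianPDFReal 0 1 (x i)
      = ((Real.sqrt (2 * Real.pi))⁻¹) ^ n * Real.exp (-‖x‖ ^ 2 / 2) := by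
  have hnorm : ‖x‖ ^ 2 = ∑ i, (x i) ^ 2 := by
    rw [EuclideanSpace.norm_eq, Real.sq_sqrt
      (Finset.sum_nonneg fun i _ => sq_nonneg _)]
    simp [Real.norm_eq_abs, sq_abs]
  simp only [gaussianPDFReal, NNReal.coe_one, mul_one, sub_zero, one_div]
  rw [Finset.prod_mul_distrib, Finset.prod_const, Finset.card_univ, Fintype.card_fin,
    ← Real.exp_sum, hnorm]
  congr 1
  rw [← Finset.sum_div, Finset.sum_neg_distrib, neg_div]

noncomputable def stdDensity (n : ℕ) : EuclideanSpace ℝ (Fin n) → ℝ≥0∞ := fun x =>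
  ENNReal.ofReal (((Real.sqrt (2 * Real.pi))⁻¹) ^ n * Real.exp (-‖x‖ ^ 2 / 2))

lemma stdDensity_measurable (n : ℕ) : Measurable (stdDensity n) := by
  apply Measurable.ennreal_ofReal
  fun_prop

lemma stdDensity_norm_eq {n : ℕ} {x y : EuclideanSpace ℝ (Fin n)} (h : ‖x‖ = ‖y‖) :
    stdDensity n x = stdDensity n y := by
  unfold stdDensity
  rw [h]

/-- The standard Gaussian measure as a density against Lebesgue measure. -/
lemma stdGaussian_eq_withDensity (n : ℕ) :
    stdGaussian n
      = (volume : Measure (EuclideanSpace ℝ (Fin n))).withDensity (stdDensity n) := by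
  set e := (MeasurableEquiv.toLp 2 (Fin n → ℝ)).symm with he
  have h1 : (Measure.pi fun _ : Fin n => gaussianReal 0 1)
      = (volume : Measure (Fin n → ℝ)).withDensity (stdDensity n ∘ e.symm) := by
    rw [pi_gaussian_eq_withDensity]
    congr 1
    funext y
    simp only [Function.comp_apply, stdDensity]
    rw [← prod_gaussianPDFReal_eq]
    rfl
  rw [_root_.stdGaussian, show (MeasurableEquiv.toLp 2 (Fin n → ℝ)) = e.symm from rfl, h1, map_withDensity_equiv _ e.symm _ (stdDensity_measurable n)]
  congr 1
  exact ((EuclideanSpace.volume_preserving_symm_measurableEquiv_toLp (ι := Fin n)).symm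
    (MeasurableEquiv.toLp 2 (Fin n → ℝ)).symm).map_eq

/-- The standard Gaussian measure is invariant under linear isometries. -/
lemma stdGaussian_map_linearIsometryEquiv (n : ℕ)
    (A : EuclideanSpace ℝ (Fin n) ≃ₗᵢ[ℝ] EuclideanSpace ℝ (Fin n)) :
    (stdGaussian n).map A = stdGaussian n := by
  set eA : EuclideanSpace ℝ (Fin n) ≃ᵐ EuclideanSpace ℝ (Fin n) :=
    A.toHomeomorph.toMeasurableEquiv with heA
  have hcoe : (A : EuclideanSpace ℝ (Fin n) → EuclideanSpace ℝ (Fin n)) = eA := rfl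
  have hDA : stdDensity n ∘ eA = stdDensity n := by
    funext x
    exact stdDensity_norm_eq (A.norm_map x)
  have key := map_withDensity_equiv (volume : Measure (EuclideanSpace ℝ (Fin n))) eA
    (stdDensity n) (stdDensity_measurable n)
  rw [hDA] at key
  rw [stdGaussian_eq_withDensity, hcoe, key]
  congr 1
  rw [← hcoe]
  exact A.measurePreserving.map_eq

/-- Variance-exploding case of the paper's Theorem 1: if `μ₀` is invariant under a family `𝒢` of
bijective isometries of `ℝⁿ`, `X₀ ∼ μ₀`, and `ε` is an independent standard Gaussian vector, then
the law of `X₀ + σ • ε` is `𝒢`-invariant. -/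
theorem law_add_gaussian_invariant {n : ℕ} (hn : 1 ≤ n)
    (𝒢 : Set (EuclideanSpace ℝ (Fin n) → EuclideanSpace ℝ (Fin n)))
    (hbij : ∀ G ∈ 𝒢, Function.Bijective G)
    (hiso : ∀ G ∈ 𝒢, ∀ x y, ‖G x - G y‖ = ‖x - y‖)
    (μ₀ : Measure (EuclideanSpace ℝ (Fin n))) [IsProbabilityMeasure μ₀]
    (hμinv : ∀ G ∈ 𝒢, μ₀.map G = μ₀)
    {Ω : Type} [MeasureSpace Ω] [IsProbabilityMeasure (ℙ : Measure Ω)]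
    (X₀ ε : Ω → EuclideanSpace ℝ (Fin n))
    (hX₀ : Measurable X₀) (hε : Measurable ε)
    (hlawX₀ : Measure.map X₀ ℙ = μ₀)
    (hlawε : Measure.map ε ℙ = stdGaussian n)
    (hindep : IndepFun X₀ ε ℙ)
    (σ : ℝ) (hσ : 0 < σ) :
    ∀ G ∈ 𝒢,
      (Measure.map (fun ω => X₀ ω + σ • ε ω) ℙ).map G
        = Measure.map (fun ω => X₀ ω + σ • ε ω) ℙ := by
  intro G hG
  -- `G` is an isometry, hence affine by Mazur–Ulam
  have hGiso : Isometry G := Isometry.of_dist_eq fun x y => by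
    rw [dist_eq_norm, dist_eq_norm, hiso G hG]
  have hGm : Measurable G := hGiso.continuous.measurable
  let Ge : EuclideanSpace ℝ (Fin n) ≃ᵢ EuclideanSpace ℝ (Fin n) := ⟨Equiv.ofBijective G (hbij G hG), hGiso⟩
  let A : EuclideanSpace ℝ (Fin n) ≃ₗᵢ[ℝ] EuclideanSpace ℝ (Fin n) := Ge.toRealLinearIsometryEquiv
  have hGA : ∀ x : EuclideanSpace ℝ (Fin n), G x = A x + G 0 := fun x => by
    have := Ge.toRealLinearIsometryEquiv_apply x
    simp only [A]
    rw [this]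
    show G x = G x - G 0 + G 0
    abel
  have hGadd : ∀ x y : EuclideanSpace ℝ (Fin n), G (x + σ • y) = G x + σ • (A y) := by
    intro x y
    rw [hGA (x + σ • y), hGA x, map_add, A.map_smul]
    abel
  -- measurability of the sum map
  have hadd : Measurable fun p : EuclideanSpace ℝ (Fin n) × EuclideanSpace ℝ (Fin n) => p.1 + σ • p.2 :=
    measurable_fst.add (measurable_snd.const_smul σ)
  -- joint law is product law
  have hjoint : Measure.map (fun ω => (X₀ ω, ε ω)) ℙ = μ₀.prod (stdGaussian n) := by
    rw [← hlawX₀, ← hlawε]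
    exact (indepFun_iff_map_prod_eq_prod_map_map hX₀.aemeasurable hε.aemeasurable).mp hindep
  have hsum : Measure.map (fun ω => X₀ ω + σ • ε ω) ℙ
      = (μ₀.prod (stdGaussian n)).map (fun p : EuclideanSpace ℝ (Fin n) × EuclideanSpace ℝ (Fin n) => p.1 + σ • p.2) := by
    rw [← hjoint, Measure.map_map hadd (hX₀.prodMk hε)]
    rfl
  rw [hsum, Measure.map_map hGm hadd]
  have hcomp : (G ∘ fun p : EuclideanSpace ℝ (Fin n) × EuclideanSpace ℝ (Fin n) => p.1 + σ • p.2)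
      = (fun p : EuclideanSpace ℝ (Fin n) × EuclideanSpace ℝ (Fin n) => p.1 + σ • p.2) ∘ (Prod.map G (A : EuclideanSpace ℝ (Fin n) → EuclideanSpace ℝ (Fin n))) := by
    funext p
    exact hGadd p.1 p.2
  rw [hcomp, ← Measure.map_map hadd (hGm.prodMap A.continuous.measurable),
    ← Measure.map_prod_map _ _ hGm A.continuous.measurable,
    hμinv G hG, stdGaussian_map_linearIsometryEquiv n A]
end

section
/- Let q : ℝⁿ → ℝ be positive and differentiable, and let G : ℝⁿ → ℝⁿ be differentiable with q(G(x)) = q(x) for all x. Then for every x the gradient of log q satisfies (DG(x))*(∇ log q(G(x))) = ∇ log q(x), where DG(x) is the Fréchet derivative of G at x and (DG(x))* is its adjoint with respect to the Euclidean inner product. In particular, if DG(x) is invertible, then ∇ log q(G(x)) = ((DG(x))*)⁻¹ (∇ log q(x)); that is, the score function of a 𝒢-invariant distribution is (𝒢, ∇⁻¹)-equivariant. -/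
open scoped RealInnerProductSpace

lemma inner_gradient_apply {n : ℕ} (f : EuclideanSpace ℝ (Fin n) → ℝ)
    (x v : EuclideanSpace ℝ (Fin n)) :
    ⟪gradient f x, v⟫ = fderiv ℝ f x v := by
  simp [gradient, ← InnerProductSpace.toDual_apply_apply]

/-- The score function of a `𝒢`-invariant distribution is `(𝒢, ∇⁻¹)`-equivariant: if
`q ∘ G = q` with `q` positive and differentiable and `G` differentiable, then
`(DG(x))* (∇ log q (G x)) = ∇ log q (x)`, and whenever `DG(x)` is invertible,
`∇ log q (G x) = ((DG(x))*)⁻¹ (∇ log q x)`. -/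
theorem score_equivariant {n : ℕ}
    (q : EuclideanSpace ℝ (Fin n) → ℝ)
    (G : EuclideanSpace ℝ (Fin n) → EuclideanSpace ℝ (Fin n))
    (hq_pos : ∀ x, 0 < q x) (hq : Differentiable ℝ q)
    (hG : Differentiable ℝ G)
    (hinv : ∀ x, q (G x) = q x) :
    ∀ x,
      (ContinuousLinearMap.adjoint (fderiv ℝ G x))
          (gradient (fun y => Real.log (q y)) (G x))
        = gradient (fun y => Real.log (q y)) x
      ∧ ∀ e : EuclideanSpace ℝ (Fin n) ≃L[ℝ] EuclideanSpace ℝ (Fin n),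
          (e : EuclideanSpace ℝ (Fin n) →L[ℝ] EuclideanSpace ℝ (Fin n)) = fderiv ℝ G x →
          gradient (fun y => Real.log (q y)) (G x)
            = (ContinuousLinearMap.adjoint
                (e.symm : EuclideanSpace ℝ (Fin n) →L[ℝ] EuclideanSpace ℝ (Fin n)))
                (gradient (fun y => Real.log (q y)) x) := by
  intro x
  set f : EuclideanSpace ℝ (Fin n) → ℝ := fun y => Real.log (q y) with hf_def
  have hf : ∀ y, DifferentiableAt ℝ f y := fun y =>
    (hq y).log (ne_of_gt (hq_pos y))
  have hcomp : f ∘ G = f := by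
    funext y; simp [hf_def, hinv]
  have hchain : fderiv ℝ f x = (fderiv ℝ f (G x)).comp (fderiv ℝ G x) := by
    rw [← fderiv_comp x (hf (G x)) (hG x)]
    rw [hcomp]
  have key : (ContinuousLinearMap.adjoint (fderiv ℝ G x)) (gradient f (G x))
      = gradient f x := by
    apply ext_inner_right ℝ
    intro v
    rw [ContinuousLinearMap.adjoint_inner_left, inner_gradient_apply,
      inner_gradient_apply, hchain]
    rfl
  refine ⟨key, fun e he => ?_⟩
  have h2 := congrArg (ContinuousLinearMap.adjoint
      (e.symm : EuclideanSpace ℝ (Fin n) →L[ℝ] EuclideanSpace ℝ (Fin n))) key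
  rw [← h2, ← he]
  rw [← ContinuousLinearMap.comp_apply, ← ContinuousLinearMap.adjoint_comp]
  simp [ContinuousLinearMap.adjoint_id]
end

section
/- Let q be a positive differentiable function on configurations of m points in ℝⁿ (i.e., on the space of functions C : Fin m → ℝⁿ with the product Euclidean inner product) that is SE(n)-invariant: q(G(C)) = q(C) for every rotation R (orthogonal n×n matrix with det R = 1) and every b ∈ ℝⁿ, where G(C) is the configuration i ↦ R·(C i) + b. Then the gradient of log q is SO(n)-equivariant and translation-invariant: for every such R, b and every configuration C, the i-th component of ∇ log q at the transformed configuration G(C) equals R applied to the i-th component of ∇ log q at C, for each i (the paper's claim that the score function of an SE(n)-invariant distribution is SO(n)-equivariant and translation-invariant). -/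
open scoped RealInnerProductSpace
open Matrix

set_option maxHeartbeats 10000000
set_option synthInstance.maxHeartbeats 2000000
/-- The score function of an SE(n)-invariant distribution on configurations of `m` points in
`ℝⁿ` is SO(n)-equivariant and translation-invariant: for a positive differentiable `q` on the
configuration space (with the product Euclidean inner product) satisfying
`q (fun i => R (C i) + b) = q C` for every rotation `R` and translation `b`, each component of
the gradient of `log q` at the transformed configuration equals `R` applied to the corresponding
component of the gradient at `C`. -/
theorem score_SEn_equivariant {n m : ℕ}
    (q : PiLp 2 (fun _ : Fin m => EuclideanSpace ℝ (Fin n)) → ℝ)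
    (hq_pos : ∀ C, 0 < q C) (hq : Differentiable ℝ q)
    (hinv : ∀ (R : Matrix (Fin n) (Fin n) ℝ), Rᵀ * R = 1 → R.det = 1 →
      ∀ (b : EuclideanSpace ℝ (Fin n)) (C : PiLp 2 fun _ : Fin m => EuclideanSpace ℝ (Fin n)),
        q (WithLp.toLp 2 (fun i => Matrix.toEuclideanLin R (C i) + b)) = q C) :
    ∀ (R : Matrix (Fin n) (Fin n) ℝ), Rᵀ * R = 1 → R.det = 1 →
      ∀ (b : EuclideanSpace ℝ (Fin n)) (C : PiLp 2 fun _ : Fin m => EuclideanSpace ℝ (Fin n))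
        (i : Fin m),
        gradient (fun D => Real.log (q D)) (WithLp.toLp 2 (fun j => Matrix.toEuclideanLin R (C j) + b)) i
          = Matrix.toEuclideanLin R (gradient (fun D => Real.log (q D)) C i) := by
  intro R hR hdet b C i
  classical
  set f : PiLp 2 (fun _ : Fin m => EuclideanSpace ℝ (Fin n)) → ℝ :=
    fun D => Real.log (q D) with hf_def
  have hf : Differentiable ℝ f := fun x => ((hq x).log (hq_pos x).ne')
  have hRR' : R * Rᵀ = 1 := mul_eq_one_comm.mp hR
  -- the componentwise rotation as a linear map
  let A : (PiLp 2 fun _ : Fin m => EuclideanSpace ℝ (Fin n)) →ₗ[ℝ]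
      (PiLp 2 fun _ : Fin m => EuclideanSpace ℝ (Fin n)) :=
    { toFun := fun D => WithLp.toLp 2 (fun j => Matrix.toEuclideanLin R (D j))
      map_add' := by intro x y; ext j : 1; simp [PiLp.add_apply]
      map_smul' := by intro c x; ext j : 1; simp [PiLp.smul_apply] }
  let A' : (PiLp 2 fun _ : Fin m => EuclideanSpace ℝ (Fin n)) →L[ℝ]
      (PiLp 2 fun _ : Fin m => EuclideanSpace ℝ (Fin n)) :=
    ⟨A, (PiLp.continuous_toLp 2 _).comp (continuous_pi fun j =>
      (Matrix.toEuclideanLin R).continuous_of_finiteDimensional.comp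
        ((continuous_apply j).comp (PiLp.continuous_ofLp 2 _)))⟩
  let T : (PiLp 2 fun _ : Fin m => EuclideanSpace ℝ (Fin n)) →
      (PiLp 2 fun _ : Fin m => EuclideanSpace ℝ (Fin n)) :=
    fun D => WithLp.toLp 2 (fun j => Matrix.toEuclideanLin R (D j) + b)
  have hT : HasFDerivAt T A' C := by
    have : T = fun D => A' D +
        (WithLp.toLp 2 (fun _ => b) : PiLp 2 fun _ : Fin m => EuclideanSpace ℝ (Fin n)) := rfl
    rw [this]
    exact A'.hasFDerivAt.add_const _
  have hfT : f ∘ T = f := by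
    funext D
    exact congrArg Real.log (hinv R hR hdet b D)
  have hcomp : fderiv ℝ f C = (fderiv ℝ f (T C)).comp A' := by
    have h1 : HasFDerivAt (f ∘ T) ((fderiv ℝ f (T C)).comp A') C :=
      (hf (T C)).hasFDerivAt.comp C hT
    rw [hfT] at h1
    exact (hf C).hasFDerivAt.unique h1
  have key : ∀ v, ⟪gradient f C, v⟫ = ⟪gradient f (T C), A' v⟫ := by
    intro v
    rw [gradient, gradient, InnerProductSpace.toDual_symm_apply,
      InnerProductSpace.toDual_symm_apply, hcomp]
    rfl
  -- apply key with a single-coordinate vector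
  have single_inner : ∀ (D : PiLp 2 fun _ : Fin m => EuclideanSpace ℝ (Fin n))
      (u : EuclideanSpace ℝ (Fin n)),
      ⟪D, WithLp.toLp 2 (Pi.single i u : ∀ _ : Fin m, EuclideanSpace ℝ (Fin n))⟫ = ⟪D i, u⟫ := by
    intro D u
    rw [PiLp.inner_apply]
    rw [Finset.sum_eq_single i]
    · simp
    · intro j _ hj; simp [Pi.single_apply, hj]
    · simp
  have hAsingle : ∀ (u : EuclideanSpace ℝ (Fin n)),
      A' (WithLp.toLp 2 (Pi.single i u : ∀ _ : Fin m, EuclideanSpace ℝ (Fin n)))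
        = WithLp.toLp 2 (Pi.single i (Matrix.toEuclideanLin R u) : ∀ _ : Fin m, EuclideanSpace ℝ (Fin n)) := by
    intro u
    ext j : 1
    by_cases h : j = i
    · subst h; simp [A', A, Pi.single_apply]
    · simp [A', A, Pi.single_apply, h]
  have hRRt : ∀ w : EuclideanSpace ℝ (Fin n),
      Matrix.toEuclideanLin R (Matrix.toEuclideanLin Rᵀ w) = w := by
    intro w
    simp [Matrix.toEuclideanLin_apply, Matrix.mulVec_mulVec, hRR']
  have hadj : ∀ (x w : EuclideanSpace ℝ (Fin n)),
      ⟪x, Matrix.toEuclideanLin Rᵀ w⟫ = ⟪Matrix.toEuclideanLin R x, w⟫ := by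
    intro x w
    have h1 : (Rᵀ : Matrix (Fin n) (Fin n) ℝ) = Rᴴ := (R.conjTranspose_eq_transpose_of_trivial).symm
    rw [h1, Matrix.toEuclideanLin_conjTranspose_eq_adjoint, LinearMap.adjoint_inner_right]
  apply ext_inner_right ℝ
  intro w
  have := key (WithLp.toLp 2 (Pi.single i (Matrix.toEuclideanLin Rᵀ w)))
  rw [single_inner, hAsingle, single_inner, hRRt, hadj] at this
  exact this.symm
end

section
/- Let 𝒢 be a set of differentiable bijections of ℝⁿ whose Fréchet derivative is invertible at every point, and let q : ℝⁿ → ℝ be positive, differentiable, and 𝒢-invariant (q ∘ G = q for all G ∈ 𝒢). Let M ⊆ ℝⁿ be such that every x ∈ ℝⁿ can be written as x = G(m) for some G ∈ 𝒢 and m ∈ M. Let s : ℝⁿ → ℝⁿ be (𝒢, ∇⁻¹)-equivariant, meaning (DG(x))*(s(G(x))) = s(x) for all G ∈ 𝒢 and all x. If s(m) = ∇ log q(m) for every m ∈ M, then s(x) = ∇ log q(x) for every x ∈ ℝⁿ (the paper's Theorem 2: equivalence class manifold representation — an equivariant model matching the score on a set of representatives matches it everywhere). -/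
open InnerProductSpace ContinuousLinearMap

lemma inner_gradient_eq {n : ℕ} (f : EuclideanSpace ℝ (Fin n) → ℝ)
    (x v : EuclideanSpace ℝ (Fin n)) :
    (inner ℝ (gradient f x) v : ℝ) = fderiv ℝ f x v := by
  rw [gradient, toDual_symm_apply]

lemma gradient_comp {n : ℕ} (f : EuclideanSpace ℝ (Fin n) → ℝ)
    (G : EuclideanSpace ℝ (Fin n) → EuclideanSpace ℝ (Fin n))
    (m : EuclideanSpace ℝ (Fin n))
    (hG : DifferentiableAt ℝ G m) (hf : DifferentiableAt ℝ f (G m)) :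
    gradient (f ∘ G) m = ContinuousLinearMap.adjoint (fderiv ℝ G m) (gradient f (G m)) := by
  apply ext_inner_right ℝ
  intro v
  rw [inner_gradient_eq, adjoint_inner_left, inner_gradient_eq]
  rw [fderiv_comp m hf hG]
  rfl

/-- The paper's Theorem 2 (equivalence class manifold representation): if `q` is a positive,
differentiable, `𝒢`-invariant density, every point of `ℝⁿ` is of the form `G m` with `G ∈ 𝒢`
and `m` in the set of representatives `M`, and `s` is a `(𝒢, ∇⁻¹)`-equivariant model that
matches the score `∇ log q` on `M`, then `s` matches the score everywhere. -/
theorem ecm_representation {n : ℕ}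
    (𝒢 : Set (EuclideanSpace ℝ (Fin n) → EuclideanSpace ℝ (Fin n)))
    (hGdiff : ∀ G ∈ 𝒢, Differentiable ℝ G)
    (hGbij : ∀ G ∈ 𝒢, Function.Bijective G)
    (hGinv : ∀ G ∈ 𝒢, ∀ x : EuclideanSpace ℝ (Fin n),
      ∃ e : EuclideanSpace ℝ (Fin n) ≃L[ℝ] EuclideanSpace ℝ (Fin n),
        (e : EuclideanSpace ℝ (Fin n) →L[ℝ] EuclideanSpace ℝ (Fin n)) = fderiv ℝ G x)
    (q : EuclideanSpace ℝ (Fin n) → ℝ)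
    (hq_pos : ∀ x, 0 < q x) (hq : Differentiable ℝ q)
    (hqinv : ∀ G ∈ 𝒢, ∀ x, q (G x) = q x)
    (M : Set (EuclideanSpace ℝ (Fin n)))
    (hM : ∀ x : EuclideanSpace ℝ (Fin n), ∃ G ∈ 𝒢, ∃ m ∈ M, G m = x)
    (s : EuclideanSpace ℝ (Fin n) → EuclideanSpace ℝ (Fin n))
    (hs_equiv : ∀ G ∈ 𝒢, ∀ x,
      (ContinuousLinearMap.adjoint (fderiv ℝ G x)) (s (G x)) = s x)
    (hs_on_M : ∀ m ∈ M, s m = gradient (fun y => Real.log (q y)) m) :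
    ∀ x, s x = gradient (fun y => Real.log (q y)) x := by
  intro x
  obtain ⟨G, hG, m, hm, hGm⟩ := hM x
  set f : EuclideanSpace ℝ (Fin n) → ℝ := fun y => Real.log (q y) with hf
  have hfd : Differentiable ℝ f := fun y => ((hq y).log (hq_pos y).ne')
  -- log q ∘ G = log q
  have hcomp : f ∘ G = f := by
    funext y; simp [hf, hqinv G hG y]
  -- score equivariance at m
  have hgrad : gradient f m = ContinuousLinearMap.adjoint (fderiv ℝ G m) (gradient f (G m)) := by
    rw [← gradient_comp f G m ((hGdiff G hG).differentiableAt) (hfd (G m)), hcomp]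
  have hsm : ContinuousLinearMap.adjoint (fderiv ℝ G m) (s (G m)) = s m := hs_equiv G hG m
  have key : ContinuousLinearMap.adjoint (fderiv ℝ G m) (s (G m))
      = ContinuousLinearMap.adjoint (fderiv ℝ G m) (gradient f (G m)) := by
    rw [hsm, hs_on_M m hm, hgrad]
  -- adjoint of invertible derivative is injective
  obtain ⟨e, he⟩ := hGinv G hG m
  have hinj : Function.Injective (ContinuousLinearMap.adjoint (fderiv ℝ G m)) := by
    rw [← he]
    have hid : ContinuousLinearMap.adjoint ((e.symm : EuclideanSpace ℝ (Fin n) →L[ℝ] _)) ∘L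
        ContinuousLinearMap.adjoint ((e : EuclideanSpace ℝ (Fin n) →L[ℝ] _)) =
        ContinuousLinearMap.id ℝ _ := by
      rw [← ContinuousLinearMap.adjoint_comp]
      have : (e : EuclideanSpace ℝ (Fin n) →L[ℝ] _) ∘L (e.symm : EuclideanSpace ℝ (Fin n) →L[ℝ] _)
          = ContinuousLinearMap.id ℝ _ := by
        ext v; simp
      rw [this, ContinuousLinearMap.adjoint_id]
    intro a b hab
    have := congrArg (ContinuousLinearMap.adjoint ((e.symm : EuclideanSpace ℝ (Fin n) →L[ℝ] _))) hab
    have h1 := ContinuousLinearMap.ext_iff.mp hid a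
    have h2 := ContinuousLinearMap.ext_iff.mp hid b
    simp only [ContinuousLinearMap.comp_apply, ContinuousLinearMap.id_apply] at h1 h2
    rw [← h1, ← h2]
    exact this
  have := hinj key
  rw [hGm] at this
  exact this
end
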